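/- Let e = [0,1] and k ≥ 4. The second derivative d²/dt² maps (λ0λ1)^3 P_{k−4}(e) bijectively onto the L²-orthogonal complement of P_1(e) in (λ0λ1) P_{k−2}(e); that is, 0 → (λ0λ1)^3 P_{k−4}(e) → (λ0λ1) P_{k−2}(e)/P_1(e) → 0 is exact. -/
import Mathlib
open Polynomial

noncomputable def antideriv (p : Polynomial ℝ) : Polynomial ℝ :=
  p.sum fun n a => C (a / (n + 1)) * X ^ (n + 1)

theorem derivative_antideriv (p : Polynomial ℝ) : derivative (antideriv p) = p := by
  unfold antideriv
  rw [Polynomial.sum, map_sum]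
  conv_rhs => rw [← p.sum_C_mul_X_pow_eq]
  rw [Polynomial.sum]
  refine Finset.sum_congr rfl fun n hn => ?_
  rw [derivative_C_mul, derivative_X_pow]
  push_cast
  rw [← mul_assoc, ← C_mul, div_mul_cancel₀]
  positivity

theorem antideriv_eval_zero (p : Polynomial ℝ) : (antideriv p).eval 0 = 0 := by
  unfold antideriv
  rw [Polynomial.sum, eval_finset_sum]
  exact Finset.sum_eq_zero fun n hn => by simp

theorem antideriv_natDegree_le (p : Polynomial ℝ) :
    (antideriv p).natDegree ≤ p.natDegree + 1 := by
  unfold antideriv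
  rw [Polynomial.sum]
  refine natDegree_sum_le_of_forall_le _ _ fun n hn => ?_
  refine (natDegree_C_mul_le _ _).trans ?_
  rw [natDegree_X_pow]
  exact Nat.succ_le_succ (le_natDegree_of_mem_supp n hn)

theorem ftc (P : Polynomial ℝ) :
    ∫ t in (0:ℝ)..1, (derivative P).eval t = P.eval 1 - P.eval 0 := by
  refine intervalIntegral.integral_eq_sub_of_hasDerivAt (fun x _ => P.hasDerivAt x) ?_
  exact (Polynomial.continuous _).intervalIntegrable _ _

theorem dvd3 (p : Polynomial ℝ) (a : ℝ) (h0 : p.eval a = 0)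
    (h1 : (derivative p).eval a = 0) (h2 : (derivative (derivative p)).eval a = 0) :
    (X - C a) ^ 3 ∣ p := by
  obtain ⟨q, hq⟩ := dvd_iff_isRoot.2 h0
  subst hq
  simp only [derivative_mul, derivative_sub, derivative_X, derivative_C, sub_zero, one_mul,
    eval_add, eval_mul, eval_sub, eval_X, eval_C, sub_self, zero_mul, mul_zero, add_zero,
    zero_add] at h1
  obtain ⟨r, hr⟩ := dvd_iff_isRoot.2 h1
  subst hr
  simp only [derivative_mul, derivative_sub, derivative_X, derivative_C, sub_zero, one_mul,
    derivative_add, eval_add, eval_mul, eval_sub, eval_X, eval_C, sub_self, zero_mul, mul_zero,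
    add_zero, zero_add] at h2
  have hra : r.eval a = 0 := by linarith
  obtain ⟨s, hs⟩ := dvd_iff_isRoot.2 hra
  exact ⟨s, by rw [hs]; ring⟩

theorem hb_ne : (X * (1 - X) : Polynomial ℝ) ≠ 0 := fun h => by
  have := congrArg (eval (1/2 : ℝ)) h
  norm_num at this

theorem hb_deg : (X * (1 - X) : Polynomial ℝ).natDegree = 2 := by
  have : (X * (1 - X) : Polynomial ℝ) = -(X ^ 2 - X) := by ring
  rw [this, natDegree_neg]
  compute_degree!

theorem ortho (f q : Polynomial ℝ) (hq'' : derivative (derivative q) = 0)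
    (h0 : f.eval 0 = 0) (h1 : f.eval 1 = 0)
    (h0' : (derivative f).eval 0 = 0) (h1' : (derivative f).eval 1 = 0) :
    ∫ t in (0:ℝ)..1, (derivative (derivative f)).eval t * q.eval t = 0 := by
  have hdG : derivative (derivative f * q - f * derivative q)
      = derivative (derivative f) * q := by
    rw [derivative_sub, derivative_mul, derivative_mul, hq'']; ring
  have h2 : (∫ t in (0:ℝ)..1, (derivative (derivative f)).eval t * q.eval t)
      = ∫ t in (0:ℝ)..1, (derivative (derivative f * q - f * derivative q)).eval t :=
    intervalIntegral.integral_congr fun t _ => by rw [hdG, eval_mul]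
  rw [h2, ftc]
  simp [h0, h1, h0', h1']

/-- Exactness of the edge bubble complex
`0 → (λ0λ1)^3 P_{k-4}(e) → (λ0λ1) P_{k-2}(e)/P_1(e) → 0` under `d²/dt²`,
on the edge `e = [0,1]` with `λ0 = 1 - t`, `λ1 = t`. -/
theorem stmt_2 (k : ℕ) (hk : 4 ≤ k) :
    (∀ u1 : Polynomial ℝ, u1.natDegree ≤ k - 4 →
      (∃ p : Polynomial ℝ, p.natDegree ≤ k - 2 ∧
        derivative (derivative ((X * (1 - X)) ^ 3 * u1)) = (X * (1 - X)) * p) ∧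
      (∀ q : Polynomial ℝ, q.natDegree ≤ 1 →
        ∫ t in (0:ℝ)..1,
          (derivative (derivative ((X * (1 - X)) ^ 3 * u1))).eval t * q.eval t = 0)) ∧
    (∀ p : Polynomial ℝ, p.natDegree ≤ k - 2 →
      (∀ q : Polynomial ℝ, q.natDegree ≤ 1 →
        ∫ t in (0:ℝ)..1, ((X * (1 - X)) * p).eval t * q.eval t = 0) →
      ∃! u1 : Polynomial ℝ, u1.natDegree ≤ k - 4 ∧
        derivative (derivative ((X * (1 - X)) ^ 3 * u1)) = (X * (1 - X)) * p) := by
  set b : Polynomial ℝ := X * (1 - X) with hb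
  constructor
  · -- Part 1
    intro u1 hu1
    set f : Polynomial ℝ := b ^ 3 * u1 with hf
    -- evaluations of f, f', f'' at 0 and 1
    have hfX : f = X ^ 3 * ((1 - X) ^ 3 * u1) := by rw [hf, hb]; ring
    have hfY : f = (1 - X) ^ 3 * (X ^ 3 * u1) := by rw [hf, hb]; ring
    have hf0 : f.eval 0 = 0 := by rw [hfX]; simp
    have hf1 : f.eval 1 = 0 := by rw [hfY]; simp
    have hf'0 : (derivative f).eval 0 = 0 := by
      rw [hfX]; simp [derivative_mul, derivative_X_pow]
    have hf'1 : (derivative f).eval 1 = 0 := by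
      rw [hfY]; simp [derivative_mul, derivative_pow, derivative_sub]
    have hf''0 : (derivative (derivative f)).eval 0 = 0 := by
      rw [hfX]; simp [derivative_mul, derivative_X_pow]
    have hf''1 : (derivative (derivative f)).eval 1 = 0 := by
      rw [hfY]; simp [derivative_mul, derivative_pow, derivative_sub]
    constructor
    · -- divisibility by b and degree bound
      have d0 : (X - C (0:ℝ)) ∣ derivative (derivative f) := by
        rw [dvd_iff_isRoot]; simpa using hf''0
      have d1 : (X - C (1:ℝ)) ∣ derivative (derivative f) := by
        rw [dvd_iff_isRoot]; simpa using hf''1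
      have hcop : IsCoprime (X - C (0:ℝ)) (X - C (1:ℝ)) :=
        isCoprime_X_sub_C_of_isUnit_sub (by norm_num)
      obtain ⟨c, hc⟩ := hcop.mul_dvd d0 d1
      refine ⟨-c, ?_, ?_⟩
      · -- degree bound
        have hfdeg : f.natDegree ≤ k + 2 := by
          refine (natDegree_mul_le).trans ?_
          have : (b ^ 3).natDegree ≤ 6 := by
            refine (natDegree_pow _ _).le.trans ?_
            rw [hb_deg]
          omega
        have hdd : (derivative (derivative f)).natDegree ≤ k := by
          have h1 := natDegree_derivative_le f
          have h2 := natDegree_derivative_le (derivative f)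
          omega
        rcases eq_or_ne c 0 with rfl | hcne
        · simp
        · rw [hc] at hdd
          rw [natDegree_mul (by exact mul_ne_zero (X_sub_C_ne_zero 0) (X_sub_C_ne_zero 1)) hcne,
            natDegree_mul (X_sub_C_ne_zero 0) (X_sub_C_ne_zero 1), natDegree_X_sub_C,
            natDegree_X_sub_C] at hdd
          rw [natDegree_neg]
          omega
      · rw [hc, hb]; simp only [C_0, C_1, sub_zero]; ring
    · -- orthogonality
      intro q hq
      have hq'' : derivative (derivative q) = 0 := by
        have h1 : (derivative q).natDegree = 0 := by
          have := natDegree_derivative_le q; omega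
        rw [eq_C_of_natDegree_le_zero h1.le, derivative_C]
      exact ortho f q hq'' hf0 hf1 hf'0 hf'1
  · -- Part 2
    intro p hp Horth
    set g : Polynomial ℝ := b * p with hg
    set F1 : Polynomial ℝ := antideriv g with hF1
    set F : Polynomial ℝ := antideriv F1 with hF
    have hdF : derivative F = F1 := derivative_antideriv _
    have hdF1 : derivative F1 = g := derivative_antideriv _
    have hF0 : F.eval 0 = 0 := antideriv_eval_zero _
    have hF10 : F1.eval 0 = 0 := antideriv_eval_zero _
    have hg0 : g.eval 0 = 0 := by rw [hg, hb]; simp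
    have hg1 : g.eval 1 = 0 := by rw [hg, hb]; simp
    -- F1.eval 1 = 0 from orthogonality with q = 1
    have hInt1 : ∫ t in (0:ℝ)..1, g.eval t = 0 := by
      have h := Horth 1 (by simp)
      have h2 : (∫ t in (0:ℝ)..1, g.eval t)
          = ∫ t in (0:ℝ)..1, (b * p).eval t * (1 : Polynomial ℝ).eval t :=
        intervalIntegral.integral_congr fun t _ => by simp [hg]
      rw [h2, h]
    have hF11 : F1.eval 1 = 0 := by
      have h := ftc F1
      rw [hdF1, hInt1, hF10, sub_zero] at h
      linarith
    -- F.eval 1 = 0 from orthogonality with q = X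
    have hIntX : ∫ t in (0:ℝ)..1, t * g.eval t = 0 := by
      have h := Horth X natDegree_X_le
      have h2 : (∫ t in (0:ℝ)..1, t * g.eval t)
          = ∫ t in (0:ℝ)..1, (b * p).eval t * (X : Polynomial ℝ).eval t :=
        intervalIntegral.integral_congr fun t _ => by simp [hg, mul_comm]
      rw [h2, h]
    have hFe1 : F.eval 1 = 0 := by
      have h := ftc (X * F1 - F)
      have hd : derivative (X * F1 - F) = X * g := by
        rw [derivative_sub, derivative_mul, derivative_X, hdF1, hdF]; ring
      rw [hd] at h
      have h2 : ∫ t in (0:ℝ)..1, (X * g).eval t = ∫ t in (0:ℝ)..1, t * g.eval t := by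
        refine intervalIntegral.integral_congr fun t _ => ?_
        simp
      rw [h2, hIntX] at h
      simp [hF0, hF10, hF11] at h
      linarith
    -- triple roots
    have dvd0 : (X - C (0:ℝ)) ^ 3 ∣ F := by
      refine dvd3 F 0 (by simpa using hF0) ?_ ?_
      · rw [hdF]; exact hF10
      · rw [hdF, hdF1]; exact hg0
    have dvd1 : (X - C (1:ℝ)) ^ 3 ∣ F := by
      refine dvd3 F 1 hFe1 ?_ ?_
      · rw [hdF]; exact hF11
      · rw [hdF, hdF1]; exact hg1
    have hcop : IsCoprime ((X - C (0:ℝ)) ^ 3) ((X - C (1:ℝ)) ^ 3) :=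
      (isCoprime_X_sub_C_of_isUnit_sub (by norm_num)).pow
    obtain ⟨v, hv⟩ := hcop.mul_dvd dvd0 dvd1
    have hFb : b ^ 3 * (-v) = F := by
      rw [hv, hb]; simp only [C_0, C_1, sub_zero]; ring
    have hb3ne : (b ^ 3 : Polynomial ℝ) ≠ 0 := pow_ne_zero _ hb_ne
    have hb3deg : (b ^ 3 : Polynomial ℝ).natDegree = 6 := by
      rw [natDegree_pow, hb_deg]
    have hEq : derivative (derivative (b ^ 3 * (-v))) = b * p := by
      rw [hFb, hdF, hdF1, hg]
    have hdeg : (-v : Polynomial ℝ).natDegree ≤ k - 4 := by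
      rcases eq_or_ne v 0 with rfl | hvne
      · simp
      · have hFdeg : F.natDegree ≤ k + 2 := by
          have h1 : g.natDegree ≤ k := by
            refine natDegree_mul_le.trans ?_
            rw [hb_deg]; omega
          have h2 := antideriv_natDegree_le g
          have h3 := antideriv_natDegree_le F1
          rw [← hF1] at h2
          rw [← hF] at h3
          omega
        rw [← hFb, natDegree_mul hb3ne (neg_ne_zero.2 hvne), hb3deg] at hFdeg
        omega
    refine ⟨-v, ⟨hdeg, hEq⟩, fun y hy => ?_⟩
    -- uniqueness
    by_contra hne
    have hsub : derivative (derivative (b ^ 3 * (y - -v))) = 0 := by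
      rw [mul_sub, map_sub, map_sub, hy.2, hEq, sub_self]
    have hyne : y - -v ≠ 0 := sub_ne_zero.2 hne
    have hdne : (b ^ 3 * (y - -v)).natDegree = 6 + (y - -v).natDegree := by
      rw [natDegree_mul hb3ne hyne, hb3deg]
    set d : Polynomial ℝ := b ^ 3 * (y - -v) with hd
    have h1 : (derivative d).natDegree = 0 := natDegree_eq_zero_of_derivative_eq_zero hsub
    have hc := eq_C_of_natDegree_eq_zero h1
    have h2 : derivative (d - C ((derivative d).coeff 0) * X) = 0 := by
      rw [derivative_sub, derivative_C_mul, derivative_X, ← hc]; simp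
    have h3 : (d - C ((derivative d).coeff 0) * X).natDegree = 0 :=
      natDegree_eq_zero_of_derivative_eq_zero h2
    have h4 : d.natDegree ≤ 1 := by
      have hdd : d = (d - C ((derivative d).coeff 0) * X) + C ((derivative d).coeff 0) * X := by
        ring
      rw [hdd]
      refine natDegree_add_le_of_degree_le (by omega) ?_
      exact (natDegree_C_mul_le _ _).trans (by simp)
    omega
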